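/- Let F be a field and let R be the subring F[X, Y^2, Y^7, X^2Y^5, X^3Y] of the polynomial ring F[X,Y] (the F-subalgebra generated by X, Y^2, Y^7, X^2Y^5, X^3Y). Let I = (X, Y^2)R. Then X^2Y^5 ∈ I^2 : I and X^2Y^5 ∉ I; hence X^2Y^5 ∈ ~I \ I and the parameter ideal I is not Ratliff-Rush closed. -/

import Mathlib

/-- The Ratliff-Rush closure of the power `I^n`:  `⋃_{k≥0} (I^{n+k} : I^k)`. -/
noncomputable def rrPow {R : Type*} [CommRing R] (I : Ideal R) (n : ℕ) : Ideal R :=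
  ⨆ k : ℕ, (I ^ (n + k)).colon ((I ^ k : Ideal R) : Set R)

open MvPolynomial

/-- The exponent vectors that occur in the subring `F[X, Y², Y⁷, X²Y⁵, X³Y]`. -/
def goodPred (d : Fin 2 →₀ ℕ) : Prop :=
  d 1 % 2 = 1 → (7 ≤ d 1 ∨ (2 ≤ d 0 ∧ 5 ≤ d 1) ∨ 3 ≤ d 0)

lemma goodPred_add {a b : Fin 2 →₀ ℕ} (ha : goodPred a) (hb : goodPred b) :
    goodPred (a + b) := by
  unfold goodPred at *
  simp only [Finsupp.add_apply] at *
  omega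

lemma goodPred_pair (a b : ℕ)
    (h : b % 2 = 1 → (7 ≤ b ∨ (2 ≤ a ∧ 5 ≤ b) ∨ 3 ≤ a)) :
    goodPred (Finsupp.single 0 a + Finsupp.single 1 b) := by
  unfold goodPred
  simpa [Finsupp.add_apply, Finsupp.single_apply] using h

lemma pair_monomial {F : Type*} [CommRing F] (a b : ℕ) :
    (MvPolynomial.X 0 : MvPolynomial (Fin 2) F) ^ a * MvPolynomial.X 1 ^ b =
      monomial (Finsupp.single 0 a + Finsupp.single 1 b) 1 := by
  rw [X_pow_eq_monomial, X_pow_eq_monomial, monomial_mul, one_mul]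

/-- The subalgebra of polynomials supported on good exponents. -/
def Good (F : Type*) [CommRing F] : Subalgebra F (MvPolynomial (Fin 2) F) where
  carrier := {p | ∀ d ∈ p.support, goodPred d}
  add_mem' := by
    classical
    intro p q hp hq d hd
    rcases Finset.mem_union.mp (MvPolynomial.support_add hd) with h | h
    exacts [hp d h, hq d h]
  mul_mem' := by
    classical
    intro p q hp hq d hd
    rcases Finset.mem_add.mp (MvPolynomial.support_mul p q hd) with ⟨a, ha, b, hb, rfl⟩
    exact goodPred_add (hp a ha) (hq b hb)
  algebraMap_mem' := by
    classical
    intro r d hd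
    rw [MvPolynomial.algebraMap_eq, ← MvPolynomial.monomial_zero'] at hd
    rw [MvPolynomial.support_monomial] at hd
    split_ifs at hd with h
    · simp at hd
    · simp only [Finset.mem_singleton] at hd
      subst hd
      intro h'
      simp at h'

lemma monomial_mem_good {F : Type*} [CommRing F] (d : Fin 2 →₀ ℕ) (hd : goodPred d) :
    (monomial d (1 : F)) ∈ Good F := by
  classical
  intro e he
  rw [MvPolynomial.support_monomial] at he
  split_ifs at he with h
  · simp at he
  · simp only [Finset.mem_singleton] at he
    subst he; exact hd

lemma pair_mem_good {F : Type*} [CommRing F] (a b : ℕ)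
    (h : b % 2 = 1 → (7 ≤ b ∨ (2 ≤ a ∧ 5 ≤ b) ∨ 3 ≤ a)) :
    (MvPolynomial.X 0 : MvPolynomial (Fin 2) F) ^ a * MvPolynomial.X 1 ^ b ∈ Good F := by
  rw [pair_monomial]
  exact monomial_mem_good _ (goodPred_pair a b h)

lemma coeff_eq_zero_of_good {F : Type*} [CommRing F] {p : MvPolynomial (Fin 2) F}
    (hp : p ∈ Good F) (d : Fin 2 →₀ ℕ) (hd : ¬ goodPred d) : coeff d p = 0 := by
  by_contra h
  exact hd (hp d (MvPolynomial.mem_support_iff.mpr h))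


lemma key_coeff1 {F : Type*} [CommRing F] {p : MvPolynomial (Fin 2) F}
    (hp : p ∈ Good F) :
    coeff (Finsupp.single 0 2 + Finsupp.single 1 5) (p * MvPolynomial.X 0) = 0 := by
  classical
  set d0 : Fin 2 →₀ ℕ := Finsupp.single 0 2 + Finsupp.single 1 5 with hd0
  have hle1 : Finsupp.single (0 : Fin 2) 1 ≤ d0 := by
    intro i
    fin_cases i <;> simp [hd0, Finsupp.single_apply]
  have hb10 : ((d0 - Finsupp.single 0 1 : Fin 2 →₀ ℕ)) 0 = 1 := by
    simp [hd0, Finsupp.single_apply]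
  have hb11 : ((d0 - Finsupp.single 0 1 : Fin 2 →₀ ℕ)) 1 = 5 := by
    simp [hd0, Finsupp.single_apply]
  have hX0 : (MvPolynomial.X 0 : MvPolynomial (Fin 2) F) =
      monomial (Finsupp.single 0 1) 1 := by
    rw [← X_pow_eq_monomial, pow_one]
  rw [hX0, coeff_mul_monomial', if_pos hle1, mul_one]
  apply coeff_eq_zero_of_good hp
  intro hgood
  have := hgood (by omega)
  omega

lemma key_coeff2 {F : Type*} [CommRing F] {p : MvPolynomial (Fin 2) F}
    (hp : p ∈ Good F) :
    coeff (Finsupp.single 0 2 + Finsupp.single 1 5) (p * MvPolynomial.X 1 ^ 2) = 0 := by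
  classical
  set d0 : Fin 2 →₀ ℕ := Finsupp.single 0 2 + Finsupp.single 1 5 with hd0
  have hle2 : Finsupp.single (1 : Fin 2) 2 ≤ d0 := by
    intro i
    fin_cases i <;> simp [hd0, Finsupp.single_apply]
  have hb20 : ((d0 - Finsupp.single 1 2 : Fin 2 →₀ ℕ)) 0 = 2 := by
    simp [hd0, Finsupp.single_apply]
  have hb21 : ((d0 - Finsupp.single 1 2 : Fin 2 →₀ ℕ)) 1 = 3 := by
    simp [hd0, Finsupp.single_apply]
  rw [X_pow_eq_monomial, coeff_mul_monomial', if_pos hle2, mul_one]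
  apply coeff_eq_zero_of_good hp
  intro hgood
  have := hgood (by omega)
  omega

lemma key_coeff_rhs {F : Type*} [CommRing F] :
    coeff (Finsupp.single 0 2 + Finsupp.single 1 5)
      ((MvPolynomial.X 0 : MvPolynomial (Fin 2) F) ^ 2 * MvPolynomial.X 1 ^ 5) = 1 := by
  rw [pair_monomial, coeff_monomial, if_pos rfl]

set_option maxHeartbeats 1000000 in
set_option synthInstance.maxHeartbeats 1000000 in
theorem stmt_12 (F : Type*) [Field F]
    (X Y : MvPolynomial (Fin 2) F)
    (hX : X = MvPolynomial.X 0) (hY : Y = MvPolynomial.X 1)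
    (A : Subalgebra F (MvPolynomial (Fin 2) F))
    (hA : A = Algebra.adjoin F {X, Y ^ 2, Y ^ 7, X ^ 2 * Y ^ 5, X ^ 3 * Y})
    (x y2 w : A)
    (hx : (x : MvPolynomial (Fin 2) F) = X)
    (hy2 : (y2 : MvPolynomial (Fin 2) F) = Y ^ 2)
    (hw : (w : MvPolynomial (Fin 2) F) = X ^ 2 * Y ^ 5)
    (I : Ideal A) (hI : I = Ideal.span {x, y2}) :
    w ∈ (I ^ 2).colon I ∧
    w ∉ I ∧
    w ∈ rrPow I 1 ∧
    rrPow I 1 ≠ I := by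
  classical
  subst hX hY hA hI
  have hy7mem : (MvPolynomial.X 1 : MvPolynomial (Fin 2) F) ^ 7 ∈
      Algebra.adjoin F {MvPolynomial.X 0, MvPolynomial.X 1 ^ 2,
        MvPolynomial.X 1 ^ 7, MvPolynomial.X 0 ^ 2 * MvPolynomial.X 1 ^ 5,
        MvPolynomial.X 0 ^ 3 * MvPolynomial.X 1} := by
    apply Algebra.subset_adjoin; simp
  have hx3ymem : (MvPolynomial.X 0 : MvPolynomial (Fin 2) F) ^ 3 * MvPolynomial.X 1 ∈
      Algebra.adjoin F {MvPolynomial.X 0, MvPolynomial.X 1 ^ 2,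
        MvPolynomial.X 1 ^ 7, MvPolynomial.X 0 ^ 2 * MvPolynomial.X 1 ^ 5,
        MvPolynomial.X 0 ^ 3 * MvPolynomial.X 1} := by
    apply Algebra.subset_adjoin; simp
  set v : (Algebra.adjoin F {MvPolynomial.X 0, MvPolynomial.X 1 ^ 2,
        MvPolynomial.X 1 ^ 7, (MvPolynomial.X 0 : MvPolynomial (Fin 2) F) ^ 2 * MvPolynomial.X 1 ^ 5,
        MvPolynomial.X 0 ^ 3 * MvPolynomial.X 1}) := ⟨_, hy7mem⟩ with hvdef
  set u : (Algebra.adjoin F {MvPolynomial.X 0, MvPolynomial.X 1 ^ 2,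
        MvPolynomial.X 1 ^ 7, (MvPolynomial.X 0 : MvPolynomial (Fin 2) F) ^ 2 * MvPolynomial.X 1 ^ 5,
        MvPolynomial.X 0 ^ 3 * MvPolynomial.X 1}) := ⟨_, hx3ymem⟩ with hudef
  have hv : (v : MvPolynomial (Fin 2) F) = MvPolynomial.X 1 ^ 7 := rfl
  have hu : (u : MvPolynomial (Fin 2) F) = MvPolynomial.X 0 ^ 3 * MvPolynomial.X 1 := rfl
  have hxI : x ∈ Ideal.span {x, y2} := Ideal.subset_span (by simp)
  have hy2I : y2 ∈ Ideal.span {x, y2} := Ideal.subset_span (by simp)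
  have hwx : w * x = u * y2 * y2 := by
    apply Subtype.ext
    push_cast
    rw [hx, hy2, hw]
    ring
  have hwy2 : w * y2 = v * x * x := by
    apply Subtype.ext
    push_cast
    rw [hx, hy2, hw]
    ring
  have hII : Ideal.span {x, y2} * Ideal.span {x, y2} ≤ (Ideal.span {x, y2}) ^ 2 :=
    le_of_eq (sq _).symm
  have h22 : y2 * y2 ∈ (Ideal.span {x, y2}) ^ 2 := hII (Ideal.mul_mem_mul hy2I hy2I)
  have h11 : x * x ∈ (Ideal.span {x, y2}) ^ 2 := hII (Ideal.mul_mem_mul hxI hxI)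
  have hwxI2 : w * x ∈ (Ideal.span {x, y2}) ^ 2 := by
    rw [hwx, mul_assoc]
    exact Ideal.mul_mem_left _ _ h22
  have hwy2I2 : w * y2 ∈ (Ideal.span {x, y2}) ^ 2 := by
    rw [hwy2, mul_assoc]
    exact Ideal.mul_mem_left _ _ h11
  -- first claim: w ∈ I² : I
  have hcolon : w ∈ ((Ideal.span {x, y2}) ^ 2).colon (Ideal.span {x, y2}) := by
    rw [Submodule.mem_colon]
    intro p hp
    induction hp using Submodule.span_induction with
    | mem z hz =>
        rcases hz with rfl | rfl
        · simpa [smul_eq_mul, mul_comm] using hwxI2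
        · simpa [smul_eq_mul, mul_comm] using hwy2I2
    | zero => simp
    | add a b _ _ ha hb => rw [smul_add]; exact Ideal.add_mem _ ha hb
    | smul c a _ ha =>
        rw [smul_comm]
        exact Submodule.smul_mem _ c ha
  -- A is contained in the Good subalgebra
  have hAle : Algebra.adjoin F {MvPolynomial.X 0, MvPolynomial.X 1 ^ 2,
      MvPolynomial.X 1 ^ 7, (MvPolynomial.X 0 : MvPolynomial (Fin 2) F) ^ 2 * MvPolynomial.X 1 ^ 5,
      MvPolynomial.X 0 ^ 3 * MvPolynomial.X 1} ≤ Good F := by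
    apply Algebra.adjoin_le
    intro p hp
    simp only [Set.mem_insert_iff, Set.mem_singleton_iff] at hp
    have e0 : (MvPolynomial.X 0 : MvPolynomial (Fin 2) F) =
        MvPolynomial.X 0 ^ 1 * MvPolynomial.X 1 ^ 0 := by ring
    have e1 : (MvPolynomial.X 1 : MvPolynomial (Fin 2) F) ^ 2 =
        MvPolynomial.X 0 ^ 0 * MvPolynomial.X 1 ^ 2 := by ring
    have e2 : (MvPolynomial.X 1 : MvPolynomial (Fin 2) F) ^ 7 =
        MvPolynomial.X 0 ^ 0 * MvPolynomial.X 1 ^ 7 := by ring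
    have e3 : (MvPolynomial.X 0 : MvPolynomial (Fin 2) F) ^ 3 * MvPolynomial.X 1 =
        MvPolynomial.X 0 ^ 3 * MvPolynomial.X 1 ^ 1 := by ring
    rcases hp with rfl | rfl | rfl | rfl | rfl
    · rw [e0]; exact pair_mem_good 1 0 (by omega)
    · rw [e1]; exact pair_mem_good 0 2 (by omega)
    · rw [e2]; exact pair_mem_good 0 7 (by omega)
    · exact pair_mem_good 2 5 (by omega)
    · rw [e3]; exact pair_mem_good 3 1 (by omega)
  -- second claim: w ∉ I
  have hwnotI : w ∉ Ideal.span {x, y2} := by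
    intro hmem
    rw [Ideal.mem_span_pair] at hmem
    obtain ⟨a, b, hab⟩ := hmem
    have habc : (a : MvPolynomial (Fin 2) F) * MvPolynomial.X 0 +
        (b : MvPolynomial (Fin 2) F) * (MvPolynomial.X 1) ^ 2 =
        (MvPolynomial.X 0 : MvPolynomial (Fin 2) F) ^ 2 * MvPolynomial.X 1 ^ 5 := by
      have h' := congrArg (Subtype.val) hab
      push_cast at h'
      rw [hx, hy2, hw] at h'
      exact h'
    have hcoeff := congrArg (coeff (Finsupp.single 0 2 + Finsupp.single 1 5)) habc
    rw [coeff_add] at hcoeff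
    have h1 := key_coeff1 (F := F) (hAle a.2)
    have h2 := key_coeff2 (F := F) (hAle b.2)
    have hrhs := key_coeff_rhs (F := F)
    rw [h1, h2, hrhs] at hcoeff
    exact one_ne_zero (hcoeff.symm.trans (add_zero (0:F)))
  have hrr : w ∈ rrPow (Ideal.span {x, y2}) 1 := by
    have hle : ((Ideal.span {x, y2}) ^ (1 + 1)).colon (((Ideal.span {x, y2}) ^ 1 : Ideal _) : Set _) ≤
        rrPow (Ideal.span {x, y2}) 1 := by
      unfold rrPow
      exact le_iSup (fun k : ℕ =>
        ((Ideal.span {x, y2}) ^ (1 + k)).colon (((Ideal.span {x, y2}) ^ k : Ideal _) : Set _)) 1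
    apply hle
    simpa [pow_one] using hcolon
  exact ⟨hcolon, hwnotI, hrr, fun h => hwnotI (h ▸ hrr)⟩
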